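/- A synchronizing commutative semi-automaton with n states admits a synchronizing word of length at most n − 1. -/

import Mathlib

/-- The action of a complete deterministic semi-automaton, extended to words. -/
def run {Q A : Type*} (δ : Q → A → Q) (q : Q) (w : List A) : Q := w.foldl δ q

section aux
variable {Q A : Type*} (δ : Q → A → Q)

lemma run_append (q : Q) (x y : List A) : run δ q (x ++ y) = run δ (run δ q x) y :=
  List.foldl_append ..

lemma run_cons (q : Q) (a : A) (w : List A) : run δ q (a :: w) = run δ (δ q a) w := rfl

lemma run_delta_comm (hcomm : ∀ (q : Q) (a b : A), δ (δ q a) b = δ (δ q b) a) (q : Q) (a : A) (w : List A) :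
    run δ (δ q a) w = δ (run δ q w) a := by
  induction w generalizing q with
  | nil => rfl
  | cons b t ih => rw [run_cons, run_cons, hcomm, ih]

lemma runs_comm (hcomm : ∀ (q : Q) (a b : A), δ (δ q a) b = δ (δ q b) a) (q : Q) (x y : List A) :
    run δ (run δ q x) y = run δ (run δ q y) x := by
  induction x generalizing q with
  | nil => rfl
  | cons a t ih =>
    rw [run_cons, ih, run_delta_comm δ hcomm, run_cons]

end aux

theorem commutative_short_sync_word {Q A : Type*} [Fintype Q] (δ : Q → A → Q)
    (hcomm : ∀ (q : Q) (a b : A), δ (δ q a) b = δ (δ q b) a)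
    (hsync : ∃ w : List A, ∃ s : Q, ∀ q : Q, run δ q w = s) :
    ∃ w : List A, w.length ≤ Fintype.card Q - 1 ∧ ∃ s : Q, ∀ q : Q, run δ q w = s := by
  classical
  obtain ⟨w0, s0, hs0⟩ := hsync
  have hQ : Nonempty Q := ⟨s0⟩
  have hex : ∃ k, ∃ w : List A, w.length = k ∧ ∃ s : Q, ∀ q : Q, run δ q w = s :=
    ⟨w0.length, w0, rfl, s0, hs0⟩
  set m := Nat.find hex with hm
  obtain ⟨w, hlen, s, hs⟩ := Nat.find_spec hex
  set S : ℕ → Finset Q := fun j => Finset.image (fun q => run δ q (w.take j)) Finset.univ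
    with hS
  have hstep : ∀ j, j < m → (S (j+1)).card < (S j).card := by
    intro j hj
    have hjlen : j < w.length := by omega
    set a := w.get ⟨j, hjlen⟩ with ha
    have htake : w.take (j+1) = w.take j ++ [a] := by
      have h := List.take_concat_get hjlen
      rw [List.concat_eq_append] at h
      rw [ha]; exact h.symm
    have himg : S (j+1) = (S j).image (fun p => δ p a) := by
      simp only [hS, Finset.image_image, htake]
      congr 1
      funext q
      simp only [run_append, Function.comp]
      rfl
    have hle : (S (j+1)).card ≤ (S j).card := by
      rw [himg]; exact Finset.card_image_le
    rcases lt_or_eq_of_le hle with h | h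
    · exact h
    exfalso
    have hinj : Set.InjOn (fun p => δ p a) (S j) := by
      apply Finset.injOn_of_card_image_eq
      rw [← himg, h]
    set u := w.take j ++ w.drop (j+1) with hu
    have hmem : ∀ q : Q, run δ q u ∈ S j := by
      intro q
      have h1 : run δ q u = run δ (run δ q (w.drop (j+1))) (w.take j) := by
        rw [hu, run_append, runs_comm δ hcomm]
      rw [h1, hS]
      exact Finset.mem_image_of_mem _ (Finset.mem_univ _)
    have hsync' : ∀ q : Q, δ (run δ q u) a = s := by
      intro q
      have h2 : δ (run δ q u) a = run δ q w := by
        rw [hu, run_append, ← run_delta_comm δ hcomm]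
        have h3 : run δ (δ (run δ q (w.take j)) a) (w.drop (j+1)) =
            run δ (run δ q (w.take (j+1))) (w.drop (j+1)) := by
          rw [htake, run_append]; rfl
        rw [h3, ← run_append, List.take_append_drop]
      rw [h2, hs q]
    have hconst : ∀ q : Q, run δ q u = run δ s u := by
      intro q
      apply hinj (Finset.mem_coe.2 (hmem q)) (Finset.mem_coe.2 (hmem s))
      simp only
      rw [hsync' q, hsync' s]
    have hulen : u.length = m - 1 := by
      simp only [hu, List.length_append, List.length_take, List.length_drop]
      omega
    exact Nat.find_min hex (show m - 1 < m by omega) ⟨u, hulen, run δ s u, hconst⟩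
  have hchain : ∀ j, j ≤ m → (S j).card + j ≤ Fintype.card Q := by
    intro j hj
    induction j with
    | zero =>
      have h0 : S 0 = Finset.univ := by
        ext q
        simp [hS, run]
      rw [h0]; simp
    | succ k ih =>
      have h1 := hstep k (by omega)
      have h2 := ih (by omega)
      omega
  have h1 : 1 ≤ (S m).card := by
    apply Finset.card_pos.mpr
    obtain ⟨q⟩ := hQ
    exact ⟨run δ q (w.take m), Finset.mem_image_of_mem _ (Finset.mem_univ q)⟩
  have hm' := hchain m le_rfl
  exact ⟨w, by omega, s, hs⟩
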